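/- arXiv:2102.00571 — 2 statements merged into one kernel-verified Lean document; each statement's English description precedes it below -/
import Mathlib

section
/- Let K ⊂ ℝⁿ be a compact convex body with nonempty interior that is strictly convex, meaning that for every unit vector n there is a unique point y_n ∈ ∂K maximizing ⟨y, n⟩ over y ∈ K. Let F : ℝⁿ → ℝ be convex, let μ = e^{−|x|²/2} dx, and let ν = e^{−F} 1_K μ. Let φ : ℝⁿ → ℝ be a convex continuously differentiable function whose gradient map ∇φ pushes μ forward onto c·ν with c = μ(ℝⁿ)/ν(ℝⁿ). Then for every ε > 0 there exist δ > 0 and M > 0, independent of the direction, such that for every unit vector n and every x with |x| > M and |x/|x| − n| < δ, one has |∇φ(x) − y_n| < ε. In particular ∇φ(x) → y_n as |x| → ∞ with x/|x| → n, uniformly in n. -/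
open MeasureTheory Real RealInnerProductSpace Set

section Helpers

variable {n : ℕ}

lemma grad_inner_mono {E : Type*} [NormedAddCommGroup E] [InnerProductSpace ℝ E]
    [CompleteSpace E] {φ : E → ℝ} (hconv : ConvexOn ℝ Set.univ φ)
    (hd : Differentiable ℝ φ) (a b : E) :
    ⟪gradient φ a, b - a⟫ ≤ ⟪gradient φ b, b - a⟫ := by
  set c : ℝ → E := fun t => t • (b - a) + a with hc_def
  have hc : ∀ t : ℝ, HasDerivAt c (b - a) t := by
    intro t
    simpa [hc_def] using ((hasDerivAt_id t).smul_const (b - a)).add_const a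
  have hg : ∀ t : ℝ, HasDerivAt (φ ∘ c) ⟪gradient φ (c t), b - a⟫ t := by
    intro t
    have h1 : HasFDerivAt φ (InnerProductSpace.toDual ℝ E (gradient φ (c t))) (c t) :=
      (hd (c t)).hasGradientAt.hasFDerivAt
    have := h1.comp_hasDerivAt t (hc t)
    simpa [InnerProductSpace.toDual_apply_apply, real_inner_comm] using this
  have hgc : ConvexOn ℝ Set.univ (φ ∘ c) := by
    have he : (φ ∘ c) = φ ∘ (AffineMap.lineMap a b) := by
      funext t
      simp [hc_def, AffineMap.lineMap_apply, Function.comp]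
    rw [he]
    simpa using hconv.comp_affineMap (AffineMap.lineMap a b)
  have h0 : ⟪gradient φ (c 0), b - a⟫ ≤ slope (φ ∘ c) 0 1 :=
    hgc.le_slope_of_hasDerivAt (Set.mem_univ 0) (Set.mem_univ 1) zero_lt_one (hg 0)
  have h1 : slope (φ ∘ c) 0 1 ≤ ⟪gradient φ (c 1), b - a⟫ :=
    hgc.slope_le_of_hasDerivAt (Set.mem_univ 0) (Set.mem_univ 1) zero_lt_one (hg 1)
  have e0 : c 0 = a := by simp [hc_def]
  have e1 : c 1 = b := by simp [hc_def]
  rw [e0] at h0; rw [e1] at h1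
  linarith

lemma grad_continuous {E : Type*} [NormedAddCommGroup E] [InnerProductSpace ℝ E]
    [CompleteSpace E] {φ : E → ℝ} (h : ContDiff ℝ 1 φ) : Continuous (gradient φ) := by
  have h1 : Continuous (fderiv ℝ φ) := h.continuous_fderiv one_ne_zero
  exact (InnerProductSpace.toDual ℝ E).symm.continuous.comp h1

lemma gauss_open_pos {S : Set (EuclideanSpace ℝ (Fin n))} (hS : IsOpen S) (hne : S.Nonempty) :
    (volume.withDensity fun x : EuclideanSpace ℝ (Fin n) =>
      ENNReal.ofReal (Real.exp (-‖x‖ ^ 2 / 2))) S ≠ 0 := by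
  rw [withDensity_apply _ hS.measurableSet]
  have hmeas : Measurable fun x : EuclideanSpace ℝ (Fin n) =>
      ENNReal.ofReal (Real.exp (-‖x‖ ^ 2 / 2)) := by
    fun_prop
  have : 0 < ∫⁻ x in S, ENNReal.ofReal (Real.exp (-‖x‖ ^ 2 / 2)) := by
    rw [lintegral_pos_iff_support hmeas]
    have hsupp : (Function.support fun x : EuclideanSpace ℝ (Fin n) =>
        ENNReal.ofReal (Real.exp (-‖x‖ ^ 2 / 2))) = Set.univ := by
      ext x
      simp [Function.mem_support, ENNReal.ofReal_eq_zero, not_le, Real.exp_pos]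
    rw [hsupp, Measure.restrict_apply MeasurableSet.univ, Set.univ_inter]
    exact hS.measure_pos volume hne
  exact this.ne'

lemma ball_inter_interior_nonempty {K : Set (EuclideanSpace ℝ (Fin n))}
    (hKconv : Convex ℝ K) (hKint : (interior K).Nonempty)
    {y : EuclideanSpace ℝ (Fin n)} (hy : y ∈ K) {r : ℝ} (hr : 0 < r) :
    (Metric.ball y r ∩ interior K).Nonempty := by
  obtain ⟨x0, hx0⟩ := hKint
  set θ : ℝ := min 1 (r / (2 * (‖x0 - y‖ + 1))) with hθdef
  have hden : 0 < 2 * (‖x0 - y‖ + 1) := by positivity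
  have hθpos : 0 < θ := lt_min one_pos (by positivity)
  refine ⟨θ • x0 + (1 - θ) • y, ?_, ?_⟩
  · rw [Metric.mem_ball, dist_eq_norm]
    have h3 : θ • x0 + (1 - θ) • y - y = θ • (x0 - y) := by
      rw [smul_sub, sub_smul, one_smul]; abel
    rw [h3, norm_smul, Real.norm_eq_abs, abs_of_pos hθpos]
    have h2 : θ ≤ r / (2 * (‖x0 - y‖ + 1)) := min_le_right _ _
    calc θ * ‖x0 - y‖ ≤ (r / (2 * (‖x0 - y‖ + 1))) * ‖x0 - y‖ :=
          mul_le_mul_of_nonneg_right h2 (norm_nonneg _)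
      _ < r := by
          rw [div_mul_eq_mul_div, div_lt_iff₀ hden]
          nlinarith [norm_nonneg (x0 - y)]
  · exact hKconv.combo_interior_closure_mem_interior hx0 (subset_closure hy)
      hθpos (by linarith [hθpos.le, (min_le_left 1 (r / (2 * (‖x0 - y‖ + 1)))) ]) (by ring)

lemma nu_ball_ne_zero {K : Set (EuclideanSpace ℝ (Fin n))}
    (hKcpt : IsCompact K) (hKconv : Convex ℝ K) (hKint : (interior K).Nonempty)
    {F : EuclideanSpace ℝ (Fin n) → ℝ} (hFc : Continuous F)
    {y : EuclideanSpace ℝ (Fin n)} (hy : y ∈ K) {r : ℝ} (hr : 0 < r) :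
    (volume.withDensity fun x => ENNReal.ofReal
      (Set.indicator K (fun z => Real.exp (-F z) * Real.exp (-‖z‖ ^ 2 / 2)) x))
      (Metric.ball y r) ≠ 0 := by
  set g : EuclideanSpace ℝ (Fin n) → ENNReal := fun x => ENNReal.ofReal
      (Set.indicator K (fun z => Real.exp (-F z) * Real.exp (-‖z‖ ^ 2 / 2)) x) with hg
  have hmeas : Measurable g := by
    apply Measurable.ennreal_ofReal
    exact Measurable.indicator (by fun_prop) hKcpt.measurableSet
  have hsuppmeas : MeasurableSet (Function.support g) := by
    rw [Function.support_eq_preimage]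
    exact hmeas (measurableSet_singleton 0).compl
  rw [withDensity_apply _ measurableSet_ball]
  have hpos : 0 < ∫⁻ x in Metric.ball y r, g x := by
    rw [lintegral_pos_iff_support hmeas]
    have hsub : Metric.ball y r ∩ interior K ⊆ Function.support g ∩ Metric.ball y r := by
      rintro x ⟨hxb, hxi⟩
      refine ⟨?_, hxb⟩
      have hxK : x ∈ K := interior_subset hxi
      simp only [hg, Function.mem_support, Set.indicator_of_mem hxK, ne_eq,
        ENNReal.ofReal_eq_zero, not_le]
      positivity
    rw [Measure.restrict_apply hsuppmeas]
    exact lt_of_lt_of_le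
      ((Metric.isOpen_ball.inter isOpen_interior).measure_pos volume
        (ball_inter_interior_nonempty hKconv hKint hy hr))
      (measure_mono hsub)
  exact hpos.ne'

lemma nu_compl_zero {K : Set (EuclideanSpace ℝ (Fin n))} (hKcpt : IsCompact K)
    (F : EuclideanSpace ℝ (Fin n) → ℝ) :
    (volume.withDensity fun x => ENNReal.ofReal
      (Set.indicator K (fun z => Real.exp (-F z) * Real.exp (-‖z‖ ^ 2 / 2)) x)) Kᶜ = 0 := by
  rw [withDensity_apply _ hKcpt.measurableSet.compl]
  have hz : ∀ᵐ x ∂volume, x ∈ Kᶜ → (ENNReal.ofReal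
      (Set.indicator K (fun z => Real.exp (-F z) * Real.exp (-‖z‖ ^ 2 / 2)) x)
      = (0 : ENNReal)) := by
    refine ae_of_all _ (fun x hx => ?_)
    simp [Set.indicator_of_notMem hx]
  rw [setLIntegral_congr_fun_ae hKcpt.measurableSet.compl hz, lintegral_zero]

lemma nu_univ_ne_top {K : Set (EuclideanSpace ℝ (Fin n))} (hKcpt : IsCompact K)
    {F : EuclideanSpace ℝ (Fin n) → ℝ} (hFc : Continuous F) :
    (volume.withDensity fun x => ENNReal.ofReal
      (Set.indicator K (fun z => Real.exp (-F z) * Real.exp (-‖z‖ ^ 2 / 2)) x))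
      Set.univ ≠ ⊤ := by
  rcases K.eq_empty_or_nonempty with hK | hK
  · subst hK
    simp [withDensity_apply _ MeasurableSet.univ]
  obtain ⟨m, hmK, hmin⟩ := hKcpt.exists_isMinOn hK hFc.continuousOn
  have hbound : ∀ x, ENNReal.ofReal
      (Set.indicator K (fun z => Real.exp (-F z) * Real.exp (-‖z‖ ^ 2 / 2)) x)
      ≤ Set.indicator K (fun _ => ENNReal.ofReal (Real.exp (-F m))) x := by
    intro x
    by_cases hx : x ∈ K
    · rw [Set.indicator_of_mem hx, Set.indicator_of_mem hx]
      apply ENNReal.ofReal_le_ofReal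
      have h1 : Real.exp (-F x) ≤ Real.exp (-F m) := Real.exp_le_exp.2 (by
        have := hmin hx; simpa using this)
      have h2 : Real.exp (-‖x‖ ^ 2 / 2) ≤ 1 :=
        Real.exp_le_one_iff.2 (by nlinarith [sq_nonneg ‖x‖])
      nlinarith [Real.exp_pos (-F x), Real.exp_pos (-‖x‖ ^ 2 / 2)]
    · simp [Set.indicator_of_notMem hx]
  rw [withDensity_apply _ MeasurableSet.univ, Measure.restrict_univ]
  have hlt : (∫⁻ x, ENNReal.ofReal
      (Set.indicator K (fun z => Real.exp (-F z) * Real.exp (-‖z‖ ^ 2 / 2)) x)) < ⊤ := by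
    calc (∫⁻ x, ENNReal.ofReal
          (Set.indicator K (fun z => Real.exp (-F z) * Real.exp (-‖z‖ ^ 2 / 2)) x))
        ≤ ∫⁻ x, Set.indicator K (fun _ => ENNReal.ofReal (Real.exp (-F m))) x :=
          lintegral_mono hbound
      _ = ENNReal.ofReal (Real.exp (-F m)) * volume K := by
          rw [lintegral_indicator hKcpt.measurableSet, setLIntegral_const]
      _ < ⊤ := ENNReal.mul_lt_top ENNReal.ofReal_lt_top hKcpt.measure_lt_top
  exact hlt.ne

end Helpers

/-- For a strictly convex compact body `K`, the Brenier map `∇φ` transporting the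
Gaussian onto a log-concave measure supported on `K` converges, as `|x| → ∞` with
`x/|x| → n`, to the unique point of `∂K` with outward unit normal `n`, uniformly in the
direction `n`. -/
theorem gradient_tends_to_normal_point {n : ℕ}
    (K : Set (EuclideanSpace ℝ (Fin n)))
    (hKcpt : IsCompact K) (hKconv : Convex ℝ K) (hKint : (interior K).Nonempty)
    (hstrict : ∀ u : EuclideanSpace ℝ (Fin n), ‖u‖ = 1 →
      ∃! y, y ∈ K ∧ ∀ z ∈ K, ⟪z, u⟫ ≤ ⟪y, u⟫)
    (F : EuclideanSpace ℝ (Fin n) → ℝ) (hF : ConvexOn ℝ Set.univ F)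
    (μ ν : Measure (EuclideanSpace ℝ (Fin n)))
    (hμ : μ = volume.withDensity fun x => ENNReal.ofReal (Real.exp (-‖x‖ ^ 2 / 2)))
    (hν : ν = volume.withDensity fun x =>
      ENNReal.ofReal
        (Set.indicator K (fun y => Real.exp (-F y) * Real.exp (-‖y‖ ^ 2 / 2)) x))
    (φ : EuclideanSpace ℝ (Fin n) → ℝ)
    (hφconv : ConvexOn ℝ Set.univ φ) (hφC1 : ContDiff ℝ 1 φ)
    (hpush : ∀ E : Set (EuclideanSpace ℝ (Fin n)), MeasurableSet E →
      μ (gradient φ ⁻¹' E) = (μ Set.univ / ν Set.univ) * ν E) :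
    ∀ ε > (0 : ℝ), ∃ δ > (0 : ℝ), ∃ M > (0 : ℝ),
      ∀ u : EuclideanSpace ℝ (Fin n), ‖u‖ = 1 →
      ∀ y, (y ∈ K ∧ ∀ z ∈ K, ⟪z, u⟫ ≤ ⟪y, u⟫) →
      ∀ x, M < ‖x‖ → ‖(‖x‖⁻¹ • x) - u‖ < δ →
        ‖gradient φ x - y‖ < ε := by
  have hFc : Continuous F := hF.locallyLipschitz.continuous
  have hd : Differentiable ℝ φ := hφC1.differentiable one_ne_zero
  -- the gradient takes values in K
  have hrange : ∀ x, gradient φ x ∈ K := by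
    intro x
    by_contra hx
    have hS : IsOpen (gradient φ ⁻¹' Kᶜ) :=
      hKcpt.isClosed.isOpen_compl.preimage (grad_continuous hφC1)
    have hzero : μ (gradient φ ⁻¹' Kᶜ) = 0 := by
      rw [hpush Kᶜ hKcpt.measurableSet.compl, hν, nu_compl_zero hKcpt F, mul_zero]
    rw [hμ] at hzero
    exact gauss_open_pos hS ⟨x, hx⟩ hzero
  -- the image of the gradient accumulates at every point of K
  have happrox : ∀ y ∈ K, ∀ r > (0 : ℝ), ∃ z, ‖gradient φ z - y‖ < r := by
    intro y hy r hr
    have hc : μ Set.univ / ν Set.univ ≠ 0 := by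
      rw [hμ, hν]
      simp only [ne_eq, ENNReal.div_eq_zero_iff, not_or]
      exact ⟨gauss_open_pos isOpen_univ Set.univ_nonempty, nu_univ_ne_top hKcpt hFc⟩
    have hνB : ν (Metric.ball y r) ≠ 0 := by
      rw [hν]; exact nu_ball_ne_zero hKcpt hKconv hKint hFc hy hr
    have hμpre : μ (gradient φ ⁻¹' Metric.ball y r) ≠ 0 := by
      rw [hpush _ measurableSet_ball]
      exact mul_ne_zero hc hνB
    have : (gradient φ ⁻¹' Metric.ball y r).Nonempty := by
      by_contra hne
      rw [Set.not_nonempty_iff_eq_empty] at hne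
      rw [hne, measure_empty] at hμpre
      exact hμpre rfl
    obtain ⟨z, hz⟩ := this
    exact ⟨z, by simpa [dist_eq_norm] using hz⟩
  -- bound for K
  obtain ⟨R, hR⟩ := hKcpt.isBounded.subset_closedBall 0
  -- main argument by contradiction
  by_contra hcon
  push_neg at hcon
  obtain ⟨ε, hε, hcon⟩ := hcon
  -- extract sequences
  have hseq : ∀ k : ℕ, ∃ u : EuclideanSpace ℝ (Fin n), ‖u‖ = 1 ∧
      ∃ y, (y ∈ K ∧ ∀ z ∈ K, ⟪z, u⟫ ≤ ⟪y, u⟫) ∧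
      ∃ x, ((k : ℝ) + 1) < ‖x‖ ∧ ‖(‖x‖⁻¹ • x) - u‖ < 1 / ((k : ℝ) + 1) ∧
        ε ≤ ‖gradient φ x - y‖ := by
    intro k
    exact hcon (1 / ((k : ℝ) + 1)) (by positivity) ((k : ℝ) + 1) (by positivity)
  choose u hu y hyK x hx hxw hxε using hseq
  have hynorm : ∀ k, y k ∈ K := fun k => (hyK k).1
  have hxpos : ∀ k, (0 : ℝ) < ‖x k‖ := fun k => lt_trans (by positivity) (hx k)
  set w : ℕ → EuclideanSpace ℝ (Fin n) := fun k => ‖x k‖⁻¹ • x k with hw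
  have hxw' : ∀ k, x k = ‖x k‖ • w k := by
    intro k
    rw [hw]
    simp [smul_smul, mul_inv_cancel₀ (hxpos k).ne']
  -- compactness
  set q : ℕ → (EuclideanSpace ℝ (Fin n)) × (EuclideanSpace ℝ (Fin n)) ×
      (EuclideanSpace ℝ (Fin n)) := fun k => (u k, y k, gradient φ (x k)) with hq
  have hqmem : ∀ k, q k ∈ (Metric.sphere (0 : EuclideanSpace ℝ (Fin n)) 1) ×ˢ (K ×ˢ K) := by
    intro k
    refine ⟨?_, hynorm k, hrange (x k)⟩
    simpa [mem_sphere_iff_norm] using hu k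
  obtain ⟨⟨uL, yL, p⟩, hmem, σ, hσmono, hσtend⟩ :=
    ((isCompact_sphere (0 : EuclideanSpace ℝ (Fin n)) 1).prod (hKcpt.prod hKcpt)).tendsto_subseq
      hqmem
  obtain ⟨huLs, hyLK, hpK⟩ : uL ∈ Metric.sphere (0 : EuclideanSpace ℝ (Fin n)) 1 ∧
      yL ∈ K ∧ p ∈ K := ⟨hmem.1, hmem.2.1, hmem.2.2⟩
  have huL : ‖uL‖ = 1 := by simpa [mem_sphere_iff_norm] using huLs
  -- component convergence
  have htu : Filter.Tendsto (fun j => u (σ j)) Filter.atTop (nhds uL) :=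
    (continuous_fst.tendsto _).comp hσtend
  have hty : Filter.Tendsto (fun j => y (σ j)) Filter.atTop (nhds yL) :=
    ((continuous_fst.comp continuous_snd).tendsto _).comp hσtend
  have htp : Filter.Tendsto (fun j => gradient φ (x (σ j))) Filter.atTop (nhds p) :=
    ((continuous_snd.comp continuous_snd).tendsto _).comp hσtend
  -- w converges to uL along σ
  have htw : Filter.Tendsto (fun j => w (σ j)) Filter.atTop (nhds uL) := by
    have hdiff : Filter.Tendsto (fun j => w (σ j) - u (σ j)) Filter.atTop (nhds 0) := by
      rw [tendsto_zero_iff_norm_tendsto_zero]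
      apply squeeze_zero (fun j => norm_nonneg _) (fun j => (hxw (σ j)).le)
      have h1 : Filter.Tendsto (fun j : ℕ => 1 / ((j : ℝ) + 1)) Filter.atTop (nhds 0) :=
        tendsto_one_div_add_atTop_nhds_zero_nat
      apply squeeze_zero (fun j => by positivity) (fun j => ?_) h1
      apply one_div_le_one_div_of_le (by positivity)
      have h2 : (j : ℝ) ≤ (σ j : ℝ) := by exact_mod_cast hσmono.le_apply
      linarith
    have := hdiff.add htu
    simpa using this
  -- ‖x (σ j)‖ → ∞
  have htx : Filter.Tendsto (fun j => ‖x (σ j)‖) Filter.atTop Filter.atTop := by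
    apply Filter.tendsto_atTop_mono (f := fun j : ℕ => (j : ℝ) + 1)
    · intro j
      have h2 : (j : ℝ) ≤ (σ j : ℝ) := by exact_mod_cast hσmono.le_apply
      linarith [hx (σ j)]
    · exact Filter.tendsto_atTop_add_const_right _ 1 tendsto_natCast_atTop_atTop
  -- the limit p maximizes against every value of the gradient
  have hkey : ∀ z, ⟪gradient φ z, uL⟫ ≤ ⟪p, uL⟫ := by
    intro z
    have hlow : ∀ j, -((R + ‖gradient φ z‖) * ‖z‖) / ‖x (σ j)‖ ≤
        ⟪gradient φ (x (σ j)) - gradient φ z, w (σ j)⟫ := by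
      intro j
      set k := σ j
      have hmono := grad_inner_mono hφconv hd z (x k)
      set g := gradient φ (x k) - gradient φ z with hgdef
      have h0 : (0 : ℝ) ≤ ⟪g, x k - z⟫ := by
        rw [hgdef, inner_sub_left]
        linarith
      have hsplit : ⟪g, x k - z⟫ = ‖x k‖ * ⟪g, w k⟫ - ⟪g, z⟫ := by
        rw [inner_sub_right]
        congr 1
        conv_lhs => rw [hxw' k]
        rw [real_inner_smul_right]
      have hcs : |⟪g, z⟫| ≤ (R + ‖gradient φ z‖) * ‖z‖ := by
        refine le_trans (abs_real_inner_le_norm _ _) ?_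
        apply mul_le_mul_of_nonneg_right _ (norm_nonneg z)
        rw [hgdef]
        refine le_trans (norm_sub_le _ _) ?_
        have : ‖gradient φ (x k)‖ ≤ R := by
          simpa [mem_closedBall_iff_norm] using hR (hrange (x k))
        linarith
      rw [div_le_iff₀ (hxpos k)]
      have habs := neg_abs_le ⟪g, z⟫
      nlinarith [hxpos k]
    have hlowlim : Filter.Tendsto
        (fun j => -((R + ‖gradient φ z‖) * ‖z‖) / ‖x (σ j)‖) Filter.atTop (nhds 0) :=
      Filter.Tendsto.div_atTop tendsto_const_nhds htx
    have hinlim : Filter.Tendsto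
        (fun j => ⟪gradient φ (x (σ j)) - gradient φ z, w (σ j)⟫) Filter.atTop
        (nhds ⟪p - gradient φ z, uL⟫) :=
      Filter.Tendsto.inner (htp.sub tendsto_const_nhds) htw
    have h0le : (0 : ℝ) ≤ ⟪p - gradient φ z, uL⟫ :=
      le_of_tendsto_of_tendsto' hlowlim hinlim hlow
    rw [inner_sub_left] at h0le
    linarith
  -- yL maximizes over K
  have hyLmax : ∀ z ∈ K, ⟪z, uL⟫ ≤ ⟪yL, uL⟫ := by
    intro z hz
    have hterm : ∀ j, ⟪z, u (σ j)⟫ ≤ ⟪y (σ j), u (σ j)⟫ := fun j => (hyK (σ j)).2 z hz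
    have h1 : Filter.Tendsto (fun j => ⟪z, u (σ j)⟫) Filter.atTop (nhds ⟪z, uL⟫) :=
      Filter.Tendsto.inner tendsto_const_nhds htu
    have h2 : Filter.Tendsto (fun j => ⟪y (σ j), u (σ j)⟫) Filter.atTop (nhds ⟪yL, uL⟫) :=
      Filter.Tendsto.inner hty htu
    exact le_of_tendsto_of_tendsto' h1 h2 hterm
  -- p also maximizes over K
  have hpmax : ∀ z ∈ K, ⟪z, uL⟫ ≤ ⟪p, uL⟫ := by
    intro z hz
    have h1 : ⟪yL, uL⟫ ≤ ⟪p, uL⟫ := by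
      by_contra hlt
      push_neg at hlt
      set r := (⟪yL, uL⟫ - ⟪p, uL⟫) / 2 with hrdef
      have hrpos : 0 < r := by rw [hrdef]; linarith
      obtain ⟨zz, hzz⟩ := happrox yL hyLK r hrpos
      have hz1 : ⟪gradient φ zz, uL⟫ ≤ ⟪p, uL⟫ := hkey zz
      have hz2 : |⟪gradient φ zz - yL, uL⟫| ≤ ‖gradient φ zz - yL‖ := by
        have := abs_real_inner_le_norm (gradient φ zz - yL) uL
        simpa [huL] using this
      rw [inner_sub_left] at hz2
      have := abs_le.1 hz2
      have : ⟪yL, uL⟫ - r < ⟪gradient φ zz, uL⟫ := by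
        have h3 := this.1
        linarith [hzz]
      simp only [hrdef] at this
      linarith
    exact le_trans (hyLmax z hz) h1
  -- uniqueness forces p = yL
  obtain ⟨y0, hy0, huniq⟩ := hstrict uL huL
  have hpy : p = y0 := huniq p ⟨hpK, hpmax⟩
  have hyy : yL = y0 := huniq yL ⟨hyLK, hyLmax⟩
  -- contradiction with ε ≤ ‖gradient φ (x k) - y k‖ in the limit
  have hεle : ε ≤ ‖p - yL‖ := by
    have hlim : Filter.Tendsto (fun j => ‖gradient φ (x (σ j)) - y (σ j)‖) Filter.atTop
        (nhds ‖p - yL‖) := (htp.sub hty).norm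
    exact ge_of_tendsto' hlim (fun j => hxε (σ j)) |>.trans_eq rfl
  rw [hpy, hyy, sub_self, norm_zero] at hεle
  linarith
end

section
/- Fix a real number α > 0 and an integer n ≥ 1. For each integer N ≥ 2, let A_N = ∫ over r from √N − 1 to √N of (r^{2α} + r^{2α−2}) (1 − r²/N)^{N/2 − 1} r^{n−1} dr and B_N = ∫ over r from 0 to √N of r^{2α} (1 − r²/N)^{N/2 − 1} r^{n−1} dr. Then A_N / B_N → 0 as N → ∞. In particular, B_N converges to the positive limit ∫_0^∞ r^{2α + n − 1} e^{−r²/2} dr, while A_N tends to 0. -/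
open MeasureTheory Real Filter Set

lemma tendsto_weight (r : ℝ) :
    Tendsto (fun N : ℕ => (1 - r ^ 2 / (N:ℝ)) ^ ((N : ℝ) / 2 - 1)) atTop
      (nhds (Real.exp (-r ^ 2 / 2))) := by
  have h1 : Tendsto (fun N : ℕ => ((N:ℝ)) * Real.log (1 + (-r^2) / N)) atTop
      (nhds (-r^2)) :=
    (Real.tendsto_mul_log_one_add_div_atTop (-r^2)).comp tendsto_natCast_atTop_atTop
  have h2 : Tendsto (fun N : ℕ => (1/2 - 1/(N:ℝ))) atTop (nhds (1/2 - 0)) :=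
    tendsto_const_nhds.sub (tendsto_one_div_atTop_nhds_zero_nat)
  have h3 : Tendsto (fun N : ℕ => (1/2 - 1/(N:ℝ)) * ((N:ℝ) * Real.log (1 + (-r^2)/N)))
      atTop (nhds ((1/2 - 0) * (-r^2))) := h2.mul h1
  have h4 : Tendsto (fun N : ℕ => Real.exp ((1/2 - 1/(N:ℝ)) * ((N:ℝ) * Real.log (1 + (-r^2)/N))))
      atTop (nhds (Real.exp ((1/2 - 0) * (-r^2)))) := (Real.continuous_exp.tendsto _).comp h3
  have heq : (fun N : ℕ => (1 - r ^ 2 / (N:ℝ)) ^ ((N : ℝ) / 2 - 1)) =ᶠ[atTop]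
      (fun N : ℕ => Real.exp ((1/2 - 1/(N:ℝ)) * ((N:ℝ) * Real.log (1 + (-r^2)/N)))) := by
    have hN : ∀ᶠ N : ℕ in atTop, r^2 < (N:ℝ) :=
      (tendsto_natCast_atTop_atTop (R := ℝ)).eventually_gt_atTop (r^2)
    filter_upwards [hN, eventually_gt_atTop 0] with N hNr hN0
    have hNpos : (0:ℝ) < N := by exact_mod_cast hN0
    have hpos : 0 < 1 - r^2 / N := by
      rw [sub_pos, div_lt_one hNpos]; exact hNr
    rw [Real.rpow_def_of_pos hpos]
    congr 1
    have h5 : (1 : ℝ) + (-r^2)/N = 1 - r^2/N := by ring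
    rw [h5]
    field_simp
  refine Tendsto.congr' heq.symm ?_
  convert h4 using 2
  ring

lemma weight_le (N : ℕ) (hN : 2 ≤ N) (r : ℝ) (h2 : r ^ 2 ≤ (N:ℝ)) :
    (1 - r ^ 2 / (N:ℝ)) ^ ((N : ℝ) / 2 - 1) ≤ Real.exp 1 * Real.exp (-r ^ 2 / 2) := by
  have hNpos : (0:ℝ) < N := by positivity
  have hexp : Real.exp 1 * Real.exp (-r^2/2) = Real.exp (1 - r^2/2) := by
    rw [← Real.exp_add]; ring_nf
  have he : 0 ≤ (N:ℝ)/2 - 1 := by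
    have : (2:ℝ) ≤ N := by exact_mod_cast hN
    linarith
  rcases lt_or_eq_of_le h2 with hlt | heq
  · have hpos : 0 < 1 - r^2 / N := by rw [sub_pos, div_lt_one hNpos]; exact hlt
    rw [Real.rpow_def_of_pos hpos, hexp, Real.exp_le_exp]
    have hlog : Real.log (1 - r^2/N) ≤ -(r^2/N) := by
      have := Real.log_le_sub_one_of_pos hpos
      linarith
    have h5 : Real.log (1 - r^2/N) * ((N:ℝ)/2 - 1) ≤ -(r^2/N) * ((N:ℝ)/2 - 1) :=
      mul_le_mul_of_nonneg_right hlog he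
    have h6 : -(r^2/N) * ((N:ℝ)/2 - 1) = -r^2/2 + r^2/N := by field_simp; ring
    have h7 : r^2/N ≤ 1 := by rw [div_le_one hNpos]; exact h2
    linarith
  · have hb : 1 - r^2/N = 0 := by rw [heq]; field_simp; norm_num
    rw [hb, hexp]
    rcases eq_or_lt_of_le he with he0 | he0
    · rw [← he0, Real.rpow_zero]
      have hN2 : (N:ℝ) = 2 := by linarith [(by linarith : (N:ℝ)/2 = 1)]
      have : r^2 = 2 := by rw [heq, hN2]
      rw [this]
      norm_num
    · rw [Real.rpow_eq_zero_iff_of_nonneg le_rfl |>.mpr ⟨rfl, ne_of_gt he0⟩]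
      positivity

/-- The key cut-off estimate: the Gaussian-type weight `(1 - r²/N)^{N/2-1}` makes the
mass of the outer band `√N - 1 < r < √N` negligible compared with the full integral,
which converges to the corresponding Gaussian integral. -/
theorem cutoff_band_negligible (α : ℝ) (hα : 0 < α) (n : ℕ) (hn : 1 ≤ n)
    (A B : ℕ → ℝ)
    (hA : ∀ N : ℕ, 2 ≤ N → A N =
      ∫ r in (Real.sqrt N - 1)..(Real.sqrt N),
        (r ^ (2 * α) + r ^ (2 * α - 2)) * (1 - r ^ 2 / N) ^ ((N : ℝ) / 2 - 1) *
          r ^ (n - 1))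
    (hB : ∀ N : ℕ, 2 ≤ N → B N =
      ∫ r in (0 : ℝ)..(Real.sqrt N),
        r ^ (2 * α) * (1 - r ^ 2 / N) ^ ((N : ℝ) / 2 - 1) * r ^ (n - 1)) :
    Tendsto (fun N => A N / B N) atTop (nhds 0) ∧
    Tendsto B atTop
      (nhds (∫ r in Set.Ioi (0 : ℝ), r ^ (2 * α + (n : ℝ) - 1) * Real.exp (-r ^ 2 / 2))) ∧
    0 < (∫ r in Set.Ioi (0 : ℝ), r ^ (2 * α + (n : ℝ) - 1) * Real.exp (-r ^ 2 / 2)) ∧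
    Tendsto A atTop (nhds 0) := by
  set g : ℝ → ℝ := fun r => r ^ (2 * α + (n : ℝ) - 1) * Real.exp (-r ^ 2 / 2) with hg
  -- basic facts
  have hn1 : (1:ℝ) ≤ n := by exact_mod_cast hn
  have hsexp : -1 < 2 * α + (n:ℝ) - 1 := by linarith
  have hgint : IntegrableOn g (Ioi 0) := by
    have h := integrableOn_rpow_mul_exp_neg_mul_sq (b := 1/2) (by norm_num) hsexp
    refine h.congr_fun (fun r _ => ?_) measurableSet_Ioi
    simp only [hg]
    congr 1
    congr 1
    ring
  have hgnn : ∀ r : ℝ, 0 < r → 0 < g r := fun r hr =>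
    mul_pos (Real.rpow_pos_of_pos hr _) (Real.exp_pos _)
  -- identity combining powers
  have hid : ∀ r : ℝ, 0 < r → r ^ (2 * α) * r ^ (n - 1 : ℕ) = r ^ (2 * α + (n:ℝ) - 1) := by
    intro r hr
    rw [← Real.rpow_natCast r (n-1), Nat.cast_sub hn, Nat.cast_one,
      ← Real.rpow_add hr]
    ring_nf
  -- sqrt N tends to infinity
  have hsqrt : Tendsto (fun N : ℕ => Real.sqrt N) atTop atTop := by
    have h := (tendsto_rpow_atTop (by norm_num : (0:ℝ) < 1/2)).comp
      (tendsto_natCast_atTop_atTop (R := ℝ))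
    refine h.congr fun N => ?_
    simp only [Function.comp_apply]
    exact (Real.sqrt_eq_rpow _).symm
  -- measurability
  have measB : ∀ N : ℕ, Measurable
      (fun r : ℝ => r ^ (2*α) * (1 - r^2/(N:ℝ))^((N:ℝ)/2-1) * r ^ (n-1:ℕ)) := by
    intro N; fun_prop
  have measA : ∀ N : ℕ, Measurable
      (fun r : ℝ => (r ^ (2*α) + r ^ (2*α-2)) * (1 - r^2/(N:ℝ))^((N:ℝ)/2-1) * r ^ (n-1:ℕ)) := by
    intro N; fun_prop
  -- B part
  set FB : ℕ → ℝ → ℝ := fun N => (Ioc (0:ℝ) (Real.sqrt N)).indicator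
      (fun r => r ^ (2*α) * (1 - r^2/(N:ℝ))^((N:ℝ)/2-1) * r ^ (n-1:ℕ)) with hFB
  have hBeq : ∀ᶠ N : ℕ in atTop, B N = ∫ r in Ioi (0:ℝ), FB N r := by
    filter_upwards [eventually_ge_atTop 2] with N hN
    rw [hB N hN, intervalIntegral.integral_of_le (Real.sqrt_nonneg _)]
    simp only [hFB]
    rw [setIntegral_indicator measurableSet_Ioc,
      Set.inter_eq_right.mpr Ioc_subset_Ioi_self]
  have hBlim : Tendsto (fun N => ∫ r in Ioi (0:ℝ), FB N r) atTop
      (nhds (∫ r in Ioi (0:ℝ), g r)) := by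
    apply tendsto_integral_filter_of_dominated_convergence
      (bound := fun r => Real.exp 1 * g r)
    · filter_upwards with N
      exact ((measB N).indicator measurableSet_Ioc).aestronglyMeasurable
    · filter_upwards [eventually_ge_atTop 2] with N hN
      filter_upwards [ae_restrict_mem measurableSet_Ioi] with r hr
      rcases em (r ∈ Ioc (0:ℝ) (Real.sqrt N)) with hmem | hmem
      · simp only [hFB, indicator_of_mem hmem]
        have hrpos : 0 < r := hmem.1
        have hr2 : r^2 ≤ (N:ℝ) := by
          nlinarith [hmem.2, Real.sq_sqrt (show (0:ℝ) ≤ N by positivity),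
            Real.sqrt_nonneg (N:ℝ)]
        have hNpos : (0:ℝ) < N := by positivity
        have hwnn : 0 ≤ (1 - r^2/(N:ℝ))^((N:ℝ)/2-1) :=
          Real.rpow_nonneg (by rw [sub_nonneg, div_le_one hNpos]; exact hr2) _
        have hvnn : 0 ≤ r ^ (2*α) * (1 - r^2/(N:ℝ))^((N:ℝ)/2-1) * r ^ (n-1:ℕ) := by
          have h1 : (0:ℝ) ≤ r ^ (2*α) := Real.rpow_nonneg hrpos.le _
          positivity
        rw [Real.norm_eq_abs, abs_of_nonneg hvnn]
        calc r ^ (2*α) * (1 - r^2/(N:ℝ))^((N:ℝ)/2-1) * r ^ (n-1:ℕ)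
            ≤ r ^ (2*α) * (Real.exp 1 * Real.exp (-r^2/2)) * r ^ (n-1:ℕ) := by
              refine mul_le_mul_of_nonneg_right ?_ (by positivity)
              exact mul_le_mul_of_nonneg_left (weight_le N hN r hr2)
                (Real.rpow_nonneg hrpos.le _)
          _ = Real.exp 1 * g r := by
              simp only [hg]; rw [← hid r hrpos]; ring
      · simp only [hFB, indicator_of_notMem hmem, norm_zero]
        have := hgnn r hr
        positivity
    · exact hgint.const_mul _
    · filter_upwards [ae_restrict_mem measurableSet_Ioi] with r hr
      have hev : ∀ᶠ N : ℕ in atTop, r ∈ Ioc (0:ℝ) (Real.sqrt N) := by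
        filter_upwards [hsqrt.eventually_ge_atTop r] with N hN
        exact ⟨hr, hN⟩
      have heq2 : (fun N : ℕ => r ^ (2*α) * (1 - r^2/(N:ℝ))^((N:ℝ)/2-1) * r ^ (n-1:ℕ))
          =ᶠ[atTop] fun N => FB N r := by
        filter_upwards [hev] with N hN
        simp only [hFB, indicator_of_mem hN]
      refine Tendsto.congr' heq2 ?_
      have hlim : Tendsto (fun N : ℕ => r ^ (2*α) * (1 - r^2/(N:ℝ))^((N:ℝ)/2-1) * r ^ (n-1:ℕ))
          atTop (nhds (r ^ (2*α) * Real.exp (-r^2/2) * r ^ (n-1:ℕ))) :=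
        (tendsto_const_nhds.mul (tendsto_weight r)).mul tendsto_const_nhds
      convert hlim using 2
      simp only [hg]
      rw [← hid r hr]; ring
  have hBtend : Tendsto B atTop (nhds (∫ r in Ioi (0:ℝ), g r)) :=
    Tendsto.congr' (EventuallyEq.symm hBeq) hBlim
  -- positivity of the limit
  have hLpos : 0 < ∫ r in Ioi (0:ℝ), g r := by
    rw [setIntegral_pos_iff_support_of_nonneg_ae]
    · have hsub : Ioi (0:ℝ) ⊆ Function.support g := fun r hr => ne_of_gt (hgnn r hr)
      rw [Set.inter_eq_right.mpr hsub, Real.volume_Ioi]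
      simp
    · filter_upwards [ae_restrict_mem measurableSet_Ioi] with r hr
      exact (hgnn r hr).le
    · exact hgint
  -- A part
  set FA : ℕ → ℝ → ℝ := fun N => (Ioc (Real.sqrt N - 1) (Real.sqrt N)).indicator
      (fun r => (r ^ (2*α) + r ^ (2*α-2)) * (1 - r^2/(N:ℝ))^((N:ℝ)/2-1) * r ^ (n-1:ℕ)) with hFA
  have hAeq : ∀ᶠ N : ℕ in atTop, A N = ∫ r in Ioi (0:ℝ), FA N r := by
    filter_upwards [eventually_ge_atTop 2] with N hN
    have hs1 : (1:ℝ) ≤ Real.sqrt N := by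
      rw [show (1:ℝ) = Real.sqrt 1 by simp]
      exact Real.sqrt_le_sqrt (by exact_mod_cast Nat.one_le_of_lt hN)
    rw [hA N hN, intervalIntegral.integral_of_le (by linarith)]
    simp only [hFA]
    have hsub : Ioc (Real.sqrt N - 1) (Real.sqrt N) ⊆ Ioi (0:ℝ) := by
      intro r hr
      have h1 := hr.1
      simp only [mem_Ioi]
      linarith
    rw [setIntegral_indicator measurableSet_Ioc, Set.inter_eq_right.mpr hsub]
  have hAlim : Tendsto (fun N => ∫ r in Ioi (0:ℝ), FA N r) atTop
      (nhds (∫ _r in Ioi (0:ℝ), (0:ℝ))) := by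
    apply tendsto_integral_filter_of_dominated_convergence
      (bound := fun r => 2 * Real.exp 1 * g r)
    · filter_upwards with N
      exact ((measA N).indicator measurableSet_Ioc).aestronglyMeasurable
    · filter_upwards [eventually_ge_atTop 9] with N hN
      filter_upwards [ae_restrict_mem measurableSet_Ioi] with r hr
      have hN2 : 2 ≤ N := by omega
      rcases em (r ∈ Ioc (Real.sqrt N - 1) (Real.sqrt N)) with hmem | hmem
      · simp only [hFA, indicator_of_mem hmem]
        have hs3 : (3:ℝ) ≤ Real.sqrt N := by
          rw [show (3:ℝ) = Real.sqrt 9 by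
            rw [show (9:ℝ) = 3^2 by norm_num, Real.sqrt_sq]; norm_num]
          exact Real.sqrt_le_sqrt (by exact_mod_cast hN)
        have hr1 : 1 ≤ r := by
          have := hmem.1
          linarith
        have hrpos : 0 < r := by linarith
        have hr2 : r^2 ≤ (N:ℝ) := by
          nlinarith [hmem.2, Real.sq_sqrt (show (0:ℝ) ≤ N by positivity),
            Real.sqrt_nonneg (N:ℝ)]
        have hNpos : (0:ℝ) < N := by positivity
        have hwnn : 0 ≤ (1 - r^2/(N:ℝ))^((N:ℝ)/2-1) :=
          Real.rpow_nonneg (by rw [sub_nonneg, div_le_one hNpos]; exact hr2) _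
        have hle : r ^ (2*α-2) ≤ r ^ (2*α) :=
          Real.rpow_le_rpow_of_exponent_le hr1 (by linarith)
        have ha1 : (0:ℝ) ≤ r ^ (2*α) := Real.rpow_nonneg hrpos.le _
        have ha2 : (0:ℝ) ≤ r ^ (2*α-2) := Real.rpow_nonneg hrpos.le _
        have hvnn : 0 ≤ (r ^ (2*α) + r ^ (2*α-2)) * (1 - r^2/(N:ℝ))^((N:ℝ)/2-1) * r ^ (n-1:ℕ) := by
          positivity
        rw [Real.norm_eq_abs, abs_of_nonneg hvnn]
        calc (r ^ (2*α) + r ^ (2*α-2)) * (1 - r^2/(N:ℝ))^((N:ℝ)/2-1) * r ^ (n-1:ℕ)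
            ≤ (2 * r ^ (2*α)) * (Real.exp 1 * Real.exp (-r^2/2)) * r ^ (n-1:ℕ) := by
              refine mul_le_mul_of_nonneg_right ?_ (by positivity)
              refine mul_le_mul (by linarith) (weight_le N hN2 r hr2) hwnn (by positivity)
          _ = 2 * Real.exp 1 * g r := by
              simp only [hg]; rw [← hid r hrpos]; ring
      · simp only [hFA, indicator_of_notMem hmem, norm_zero]
        have := hgnn r hr
        positivity
    · exact hgint.const_mul _
    · filter_upwards [ae_restrict_mem measurableSet_Ioi] with r hr
      have hev : ∀ᶠ N : ℕ in atTop, FA N r = 0 := by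
        filter_upwards [hsqrt.eventually_ge_atTop (r+1)] with N hN
        have : r ∉ Ioc (Real.sqrt N - 1) (Real.sqrt N) := by
          intro hmem
          have := hmem.1
          linarith
        simp only [hFA, indicator_of_notMem this]
      exact Tendsto.congr' (EventuallyEq.symm hev) tendsto_const_nhds
  have hAtend : Tendsto A atTop (nhds 0) := by
    refine Tendsto.congr' (EventuallyEq.symm hAeq) ?_
    simpa using hAlim
  have hdiv : Tendsto (fun N => A N / B N) atTop
      (nhds (0 / (∫ r in Ioi (0:ℝ), g r))) := hAtend.div hBtend (ne_of_gt hLpos)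
  rw [zero_div] at hdiv
  exact ⟨hdiv, hBtend, hLpos, hAtend⟩
end
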